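/- For σ ∈ S_{2k} written as the comb σ = σ^{odd} ⊙ σ^{even}, the number of vertical separators of σ equals the number of bonds of the sequence σ^{odd} plus the number of bonds of the sequence σ^{even}. -/

import Mathlib

/-- The entry at position `k` of `σ` (0-indexed) is a *vertical separator*:
there are positions `j, j+1, j+2` with `k = j+1` and `|σ j - σ (j+2)| = 1`. -/
def IsVSepPos {n : ℕ} (σ : Equiv.Perm (Fin n)) (k : Fin n) : Prop :=
  ∃ (j : ℕ) (h : j + 2 < n), (k : ℕ) = j + 1 ∧
    (((σ ⟨j, by omega⟩).val : ℤ) - ((σ ⟨j + 2, h⟩).val : ℤ)).natAbs = 1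

/-- The value `b` is a vertical separator of `σ`. -/
def IsVSepVal {n : ℕ} (σ : Equiv.Perm (Fin n)) (b : Fin n) : Prop :=
  IsVSepPos σ (σ⁻¹ b)

/-- The value `a` is a *horizontal separator* of `σ`: the values `a-1` and `a+1`
occupy adjacent positions of `σ` (their sum is `2a` and they differ by `2`). -/
def IsHSepVal {n : ℕ} (σ : Equiv.Perm (Fin n)) (a : Fin n) : Prop :=
  ∃ (j : ℕ) (h : j + 1 < n),
    (((σ ⟨j, by omega⟩).val : ℤ) - ((σ ⟨j + 1, h⟩).val : ℤ)).natAbs = 2 ∧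
    ((σ ⟨j, by omega⟩).val : ℤ) + ((σ ⟨j + 1, h⟩).val : ℤ) = 2 * (a : ℤ)

/-- `σ` has a bond at positions `j, j+1`. -/
def PermBondAt {n : ℕ} (σ : Equiv.Perm (Fin n)) (j : ℕ) (h : j + 1 < n) : Prop :=
  (((σ ⟨j, by omega⟩).val : ℤ) - ((σ ⟨j + 1, h⟩).val : ℤ)).natAbs = 1

/-- The sequence obtained from `σ` by deleting the entry at position `p`
and standardizing. -/
def delSeq {n : ℕ} (σ : Equiv.Perm (Fin n)) (p : Fin n) : Fin (n - 1) → ℕ :=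
  fun k =>
    let q : Fin n :=
      if (k : ℕ) < (p : ℕ) then ⟨k, by have := k.isLt; omega⟩
      else ⟨(k : ℕ) + 1, by have := k.isLt; omega⟩
    if (σ q).val < (σ p).val then (σ q).val else (σ q).val - 1

/-- A sequence has a bond at positions `j, j+1`. -/
def SeqBondAt {m : ℕ} (g : Fin m → ℕ) (j : ℕ) (h : j + 1 < m) : Prop :=
  ((g ⟨j, by omega⟩ : ℤ) - (g ⟨j + 1, h⟩ : ℤ)).natAbs = 1

/-- The number of bonds of a sequence. -/
noncomputable def seqBondCount {m : ℕ} (g : Fin m → ℕ) : ℕ :=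
  Nat.card {p : Fin m × Fin m //
    (p.2 : ℕ) = (p.1 : ℕ) + 1 ∧ ((g p.1 : ℤ) - (g p.2 : ℤ)).natAbs = 1}

/-- The number of bonds of `σ`. -/
noncomputable def bondCount {n : ℕ} (σ : Equiv.Perm (Fin n)) : ℕ :=
  Nat.card {p : Fin n × Fin n //
    (p.2 : ℕ) = (p.1 : ℕ) + 1 ∧ (((σ p.1).val : ℤ) - ((σ p.2).val : ℤ)).natAbs = 1}

/-- for `σ ∈ S_{2k}` written as a comb `σ = σ^odd ⊙ σ^even`,
the number of vertical separators of `σ` is the number of bonds of the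
odd-position subsequence plus the number of bonds of the even-position
subsequence. -/
lemma vsepVal_mk {n : ℕ} (σ : Equiv.Perm (Fin n)) (j : ℕ) (h : j + 2 < n)
    (hb : (((σ ⟨j, by omega⟩).val : ℤ) - ((σ ⟨j + 2, h⟩).val : ℤ)).natAbs = 1) :
    IsVSepVal σ (σ ⟨j + 1, by omega⟩) := by
  unfold IsVSepVal
  rw [Equiv.Perm.inv_def, Equiv.symm_apply_apply]
  exact ⟨j, h, rfl, hb⟩

noncomputable def fOdd (k : ℕ) (σ : Equiv.Perm (Fin (2 * k)))
    (x : {p : Fin k × Fin k // (p.2 : ℕ) = (p.1 : ℕ) + 1 ∧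
      (((σ ⟨2 * (p.1 : ℕ), by have := p.1.isLt; omega⟩).val : ℤ)
        - ((σ ⟨2 * (p.2 : ℕ), by have := p.2.isLt; omega⟩).val : ℤ)).natAbs = 1}) :
    {b : Fin (2 * k) // IsVSepVal σ b} :=
  ⟨σ ⟨2 * (x.1.1 : ℕ) + 1, by have := x.1.2.isLt; have := x.2.1; omega⟩, by
    obtain ⟨p, h1, hb⟩ := x
    have hlt := p.2.isLt
    have h2 : 2 * (p.1 : ℕ) + 2 < 2 * k := by omega
    have e2 : (⟨2 * (p.2 : ℕ), by have := p.2.isLt; omega⟩ : Fin (2 * k))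
        = ⟨2 * (p.1 : ℕ) + 2, h2⟩ := Fin.mk_eq_mk.mpr (by omega)
    rw [e2] at hb
    exact vsepVal_mk σ (2 * (p.1 : ℕ)) h2 hb⟩

noncomputable def fEven (k : ℕ) (σ : Equiv.Perm (Fin (2 * k)))
    (x : {p : Fin k × Fin k // (p.2 : ℕ) = (p.1 : ℕ) + 1 ∧
      (((σ ⟨2 * (p.1 : ℕ) + 1, by have := p.1.isLt; omega⟩).val : ℤ)
        - ((σ ⟨2 * (p.2 : ℕ) + 1, by have := p.2.isLt; omega⟩).val : ℤ)).natAbs = 1}) :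
    {b : Fin (2 * k) // IsVSepVal σ b} :=
  ⟨σ ⟨2 * (x.1.1 : ℕ) + 2, by have := x.1.2.isLt; have := x.2.1; omega⟩, by
    obtain ⟨p, h1, hb⟩ := x
    have hlt := p.2.isLt
    have h2 : 2 * (p.1 : ℕ) + 1 + 2 < 2 * k := by omega
    have e2 : (⟨2 * (p.2 : ℕ) + 1, by have := p.2.isLt; omega⟩ : Fin (2 * k))
        = ⟨2 * (p.1 : ℕ) + 1 + 2, h2⟩ := Fin.mk_eq_mk.mpr (by omega)
    rw [e2] at hb
    have := vsepVal_mk σ (2 * (p.1 : ℕ) + 1) h2 hb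
    have e3 : (⟨2 * (p.1 : ℕ) + 1 + 1, by omega⟩ : Fin (2 * k))
        = ⟨2 * (p.1 : ℕ) + 2, by omega⟩ := Fin.mk_eq_mk.mpr (by omega)
    rwa [e3] at this⟩

lemma card_aux (k : ℕ) (σ : Equiv.Perm (Fin (2 * k))) :
    Nat.card {b : Fin (2 * k) // IsVSepVal σ b} =
      Nat.card ({p : Fin k × Fin k // (p.2 : ℕ) = (p.1 : ℕ) + 1 ∧
          (((σ ⟨2 * (p.1 : ℕ), by have := p.1.isLt; omega⟩).val : ℤ)
            - ((σ ⟨2 * (p.2 : ℕ), by have := p.2.isLt; omega⟩).val : ℤ)).natAbs = 1}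
        ⊕ {p : Fin k × Fin k // (p.2 : ℕ) = (p.1 : ℕ) + 1 ∧
          (((σ ⟨2 * (p.1 : ℕ) + 1, by have := p.1.isLt; omega⟩).val : ℤ)
            - ((σ ⟨2 * (p.2 : ℕ) + 1, by have := p.2.isLt; omega⟩).val : ℤ)).natAbs = 1}) := by
  classical
  symm
  apply Nat.card_eq_of_bijective (Sum.elim (fOdd k σ) (fEven k σ))
  constructor
  · rintro (⟨p, hp⟩ | ⟨p, hp⟩) (⟨q, hq⟩ | ⟨q, hq⟩) h <;>
      simp only [Sum.elim_inl, Sum.elim_inr, fOdd, fEven, Subtype.mk.injEq,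
        EmbeddingLike.apply_eq_iff_eq, Fin.mk.injEq] at h
    · have h' : 2 * (p.1 : ℕ) + 1 = 2 * (q.1 : ℕ) + 1 := h
      have hpq : p = q := Prod.ext (Fin.ext (by omega))
        (Fin.ext (by have := hp.1; have := hq.1; omega))
      exact congrArg Sum.inl (Subtype.ext hpq)
    · have h' : 2 * (p.1 : ℕ) + 1 = 2 * (q.1 : ℕ) + 2 := h
      omega
    · have h' : 2 * (p.1 : ℕ) + 2 = 2 * (q.1 : ℕ) + 1 := h
      omega
    · have h' : 2 * (p.1 : ℕ) + 2 = 2 * (q.1 : ℕ) + 2 := h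
      have hpq : p = q := Prod.ext (Fin.ext (by omega))
        (Fin.ext (by have := hp.1; have := hq.1; omega))
      exact congrArg Sum.inr (Subtype.ext hpq)
  · rintro ⟨b, hb⟩
    obtain ⟨j, h, hj, hbond⟩ := hb
    have hbval : b = σ ⟨j + 1, by omega⟩ := by
      have : σ⁻¹ b = ⟨j + 1, by omega⟩ := Fin.ext hj
      rw [← this, Equiv.Perm.inv_def, Equiv.apply_symm_apply]
    have key : ∀ (a a' : Fin (2 * k)), a = ⟨j, by omega⟩ → a' = ⟨j + 2, h⟩ →
        (((σ a).val : ℤ) - ((σ a').val : ℤ)).natAbs = 1 := by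
      rintro a a' rfl rfl; exact hbond
    have key2 : ∀ a : Fin (2 * k), a = ⟨j + 1, by omega⟩ → σ a = b := by
      rintro a rfl; exact hbval.symm
    rcases Nat.even_or_odd j with ⟨m, hm⟩ | ⟨m, hm⟩
    · have hm1 : m + 1 < k := by omega
      refine ⟨Sum.inl ⟨(⟨m, by omega⟩, ⟨m + 1, hm1⟩), rfl, ?_⟩, ?_⟩
      · exact key _ _ (Fin.ext (by simp only [Fin.val_mk]; omega))
          (Fin.ext (by simp only [Fin.val_mk]; omega))
      · exact Subtype.ext (key2 _ (Fin.ext (by simp only [Fin.val_mk]; omega)))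
    · have hm1 : m + 1 < k := by omega
      refine ⟨Sum.inr ⟨(⟨m, by omega⟩, ⟨m + 1, hm1⟩), rfl, ?_⟩, ?_⟩
      · exact key _ _ (Fin.ext (by simp only [Fin.val_mk]; omega))
          (Fin.ext (by simp only [Fin.val_mk]; omega))
      · exact Subtype.ext (key2 _ (Fin.ext (by simp only [Fin.val_mk]; omega)))
theorem stmt11 (k : ℕ) (σ : Equiv.Perm (Fin (2 * k))) :
    Nat.card {b : Fin (2 * k) // IsVSepVal σ b} =
      seqBondCount (fun j : Fin k => (σ ⟨2 * (j : ℕ), by have := j.isLt; omega⟩).val)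
      + seqBondCount (fun j : Fin k => (σ ⟨2 * (j : ℕ) + 1, by have := j.isLt; omega⟩).val) := by
  classical
  simp only [seqBondCount]
  rw [← Nat.card_sum]
  exact card_aux k σ
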